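/- arXiv:2411.14266 — 2 statements merged into one kernel-verified Lean document; each statement's English description precedes it below -/
import Mathlib

section
/- Law of Large Numbers exponential moment bound: For every λ∈(0,1/(2e)) there exists a finite constant C = C(λ) such that the following holds for all N≥1. Let ρ̄ be a probability density on ℝ×ℝ² and let φ ∈ L^∞((ℝ×ℝ²)²) satisfy the one-sided cancellation condition ∫_{ℝ×ℝ²} φ(z,w) ρ̄(w) dw = 0 for every z, and ‖φ‖_{L^∞} ≤ λ < 1/(2e). Then ∫_{(ℝ×ℝ²)^N} ρ̄^{⊗N}(Z^N) exp( (1/N) ∑_{j,k=1}^N φ(z_1,z_j) φ(z_1,z_k) ) dZ^N ≤ C. -/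
open MeasureTheory Real Set
open scoped BigOperators

noncomputable section

/-- The plane `ℝ²` as a Euclidean space. -/
abbrev E2 : Type := EuclideanSpace ℝ (Fin 2)

open scoped ENNReal

namespace LLNAux

variable {Ω : Type*} [MeasureSpace Ω] [SigmaFinite (volume : Measure Ω)]

lemma split_first (n : ℕ) (F : Ω → (Fin n → Ω) → ℝ≥0∞)
    (hF : Measurable fun p : Ω × (Fin n → Ω) => F p.1 p.2) :
    ∫⁻ Z : Fin (n+1) → Ω, F (Z 0) (fun j => Z j.succ)
      = ∫⁻ z : Ω, ∫⁻ W : Fin n → Ω, F z W := by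
  have h := measurePreserving_piFinSuccAbove (fun _ : Fin (n+1) => (volume : Measure Ω)) 0
  have h2 := h.lintegral_comp (f := fun p : Ω × (Fin n → Ω) => F p.1 p.2) hF
  have h2' : (∫⁻ Z : Fin (n+1) → Ω, F (Z 0) (fun j => Z j.succ)
        ∂(Measure.pi fun _ => (volume : Measure Ω)))
      = ∫⁻ p : Ω × (Fin n → Ω), F p.1 p.2
        ∂((volume : Measure Ω).prod (Measure.pi fun _ => volume)) := h2
  rw [volume_pi, h2', MeasureTheory.lintegral_prod _ hF.aemeasurable]
  simp [volume_pi]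

lemma prod_pow (n : ℕ) (h : Ω → ℝ≥0∞) (hh : Measurable h) :
    ∫⁻ W : Fin n → Ω, ∏ j, h (W j) = (∫⁻ w, h w) ^ n := by
  induction n with
  | zero => simp [volume_pi, lintegral_const, Measure.pi_univ]
  | succ n ih =>
    have hF : Measurable fun p : Ω × (Fin n → Ω) => h p.1 * ∏ j, h (p.2 j) :=
      (hh.comp measurable_fst).mul
        (Finset.measurable_prod _ fun j _ =>
          hh.comp ((measurable_pi_apply j).comp measurable_snd))
    calc ∫⁻ Z : Fin (n+1) → Ω, ∏ j, h (Z j)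
        = ∫⁻ Z : Fin (n+1) → Ω, h (Z 0) * ∏ j : Fin n, h (Z j.succ) := by
          simp [Fin.prod_univ_succ]
      _ = ∫⁻ z, ∫⁻ W : Fin n → Ω, h z * ∏ j, h (W j) :=
          split_first n (fun z W => h z * ∏ j, h (W j)) hF
      _ = ∫⁻ z, h z * ((∫⁻ w, h w) ^ n) := by
          refine lintegral_congr fun z => ?_
          rw [lintegral_const_mul (h z) (f := fun W : Fin n → Ω => ∏ j, h (W j))
            (Finset.measurable_prod _ fun j _ => hh.comp (measurable_pi_apply j)), ih]
      _ = (∫⁻ w, h w) ^ (n+1) := by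
          rw [lintegral_mul_const _ hh, pow_succ, mul_comm]

/-- Standard Gaussian density. -/
def gpdf (g : ℝ) : ℝ := (Real.sqrt (2 * π))⁻¹ * Real.exp (-(1/2) * g ^ 2)

lemma gpdf_nonneg (g : ℝ) : 0 ≤ gpdf g := by
  unfold gpdf; positivity

lemma measurable_gpdf : Measurable gpdf :=
  measurable_const.mul ((measurable_id.pow_const 2).const_mul (-(1/2))).exp

lemma sqrt_two_pi_pos : (0:ℝ) < Real.sqrt (2 * π) :=
  Real.sqrt_pos.2 (by positivity)

lemma gpdf_mul_exp (s g : ℝ) :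
    gpdf g * Real.exp (s * g)
      = ((Real.sqrt (2 * π))⁻¹ * Real.exp (s ^ 2 / 2)) * Real.exp (-(1/2) * (g - s) ^ 2) := by
  unfold gpdf
  rw [mul_assoc, ← Real.exp_add, mul_assoc, ← Real.exp_add]
  congr 1
  ring

lemma integrable_gpdf_exp_mul (s : ℝ) :
    Integrable (fun g : ℝ => gpdf g * Real.exp (s * g)) := by
  simp only [gpdf_mul_exp]
  exact ((integrable_exp_neg_mul_sq (by norm_num : (0:ℝ) < 1/2)).comp_sub_right s).const_mul _

lemma integral_gpdf_exp_mul (s : ℝ) :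
    ∫ g : ℝ, gpdf g * Real.exp (s * g) = Real.exp (s ^ 2 / 2) := by
  simp only [gpdf_mul_exp]
  rw [integral_const_mul _ _]
  have h1 : (∫ g : ℝ, Real.exp (-(1/2) * (g - s) ^ 2))
      = ∫ g : ℝ, Real.exp (-(1/2) * g ^ 2) :=
    integral_sub_right_eq_self (fun g : ℝ => Real.exp (-(1/2) * g ^ 2)) s
  rw [h1, integral_gaussian]
  have h2 : π / (1/2) = 2 * π := by ring
  rw [h2, mul_comm ((Real.sqrt (2*π))⁻¹) _, mul_assoc, inv_mul_cancel₀ sqrt_two_pi_pos.ne',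
    mul_one]

lemma lintegral_gpdf_exp_mul (s : ℝ) :
    ∫⁻ g : ℝ, ENNReal.ofReal (gpdf g * Real.exp (s * g))
      = ENNReal.ofReal (Real.exp (s ^ 2 / 2)) := by
  rw [← ofReal_integral_eq_lintegral_ofReal (integrable_gpdf_exp_mul s)
      (ae_of_all _ fun g => mul_nonneg (gpdf_nonneg g) (Real.exp_nonneg _)),
    integral_gpdf_exp_mul]

lemma gpdf_mul_exp_sq (b g : ℝ) :
    gpdf g * Real.exp (b * g ^ 2)
      = (Real.sqrt (2 * π))⁻¹ * Real.exp (-(1/2 - b) * g ^ 2) := by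
  unfold gpdf
  rw [mul_assoc, ← Real.exp_add]
  congr 2
  ring

lemma lintegral_gpdf_exp_sq {b : ℝ} (hb : b < 1/2) :
    ∫⁻ g : ℝ, ENNReal.ofReal (gpdf g * Real.exp (b * g ^ 2))
      = ENNReal.ofReal ((Real.sqrt (2 * π))⁻¹ * Real.sqrt (π / (1/2 - b))) := by
  have hpos : (0:ℝ) < 1/2 - b := by linarith
  have hint : Integrable (fun g : ℝ => gpdf g * Real.exp (b * g ^ 2)) := by
    simp only [gpdf_mul_exp_sq]
    exact (integrable_exp_neg_mul_sq hpos).const_mul _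
  rw [← ofReal_integral_eq_lintegral_ofReal hint
      (ae_of_all _ fun g => mul_nonneg (gpdf_nonneg g) (Real.exp_nonneg _))]
  congr 1
  simp only [gpdf_mul_exp_sq]
  rw [integral_const_mul _ _, integral_gaussian]

/-- Convexity bound for Hoeffding's lemma. -/
lemma exp_le_convex {lam x : ℝ} (s : ℝ) (hlam : 0 < lam) (hx : |x| ≤ lam) :
    Real.exp (s * x) ≤ ((lam - x)/(2*lam)) * Real.exp (-(s*lam))
      + ((lam + x)/(2*lam)) * Real.exp (s*lam) := by
  have hx1 : -lam ≤ x := neg_le_of_abs_le hx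
  have hx2 : x ≤ lam := le_of_abs_le hx
  have h1 : 0 ≤ (lam - x)/(2*lam) := div_nonneg (by linarith) (by linarith)
  have h2 : 0 ≤ (lam + x)/(2*lam) := div_nonneg (by linarith) (by linarith)
  have hsum : (lam - x)/(2*lam) + (lam + x)/(2*lam) = 1 := by
    field_simp
    ring
  have harg : ((lam - x)/(2*lam)) * (-(s*lam)) + ((lam + x)/(2*lam)) * (s*lam) = s * x := by
    field_simp; ring
  have := convexOn_exp.2 (Set.mem_univ (-(s*lam))) (Set.mem_univ (s*lam)) h1 h2 hsum
  simp only [smul_eq_mul] at this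
  rw [harg] at this
  exact this

end LLNAux

open LLNAux

set_option synthInstance.maxSize 400 in
set_option maxHeartbeats 2000000 in
/-- **Law of Large Numbers exponential moment bound** (Theorem 2.3, Jabin–Wang).
For every `λ ∈ (0, 1/(2e))` there is a finite constant `C` such that for every `N ≥ 1`,
every probability density `ρ̄` on `ℝ×ℝ²` and every bounded test function `φ` with
`‖φ‖_∞ ≤ λ` satisfying the one-sided cancellation `∫ φ(z,w) ρ̄(w) dw = 0` for all `z`,
the exponential moment `∫ ρ̄^{⊗N} exp((1/N) ∑_{j,k} φ(z₁,z_j)φ(z₁,z_k))` is at most `C`. -/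
theorem law_of_large_numbers_exponential_bound
    (lam : ℝ) (hlam0 : 0 < lam) (hlam : lam < 1 / (2 * Real.exp 1)) :
    ∃ C : ℝ, ∀ (N : ℕ) (hN : 1 ≤ N),
      ∀ ρ : ℝ × E2 → ℝ,
        Measurable ρ → (∀ z, 0 ≤ ρ z) → (∫ z : ℝ × E2, ρ z = 1) →
      ∀ φ : ℝ × E2 → ℝ × E2 → ℝ,
        Measurable (fun p : (ℝ × E2) × (ℝ × E2) => φ p.1 p.2) →
        (∀ z w, |φ z w| ≤ lam) →
        (∀ z, ∫ w : ℝ × E2, φ z w * ρ w = 0) →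
        (∫ Z : Fin N → ℝ × E2, (∏ i, ρ (Z i)) *
            Real.exp ((1 / (N : ℝ)) * ∑ j : Fin N, ∑ k : Fin N,
              φ (Z ⟨0, hN⟩) (Z j) * φ (Z ⟨0, hN⟩) (Z k)))
          ≤ C := by
  classical
  have hexp1 : (1:ℝ) < Real.exp 1 := by
    have := Real.exp_one_gt_d9; linarith
  have hlamhalf : lam < 1/2 := by
    have h1 : 1 / (2 * Real.exp 1) ≤ 1 / 2 :=
      one_div_le_one_div_of_le (by norm_num) (by linarith)
    linarith
  have hb : 2 * lam^2 < 1/2 := by nlinarith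
  refine ⟨Real.exp (2*lam^2) * ((Real.sqrt (2*π))⁻¹ * Real.sqrt (π / (1/2 - 2*lam^2))), ?_⟩
  have hC0 : (0:ℝ) ≤ Real.exp (2*lam^2) * ((Real.sqrt (2*π))⁻¹ * Real.sqrt (π / (1/2 - 2*lam^2))) := by
    positivity
  intro N hN ρ hρm hρ0 hρ1 φ hφm hφb hφ0
  obtain ⟨n, rfl⟩ : ∃ n, N = n + 1 := ⟨N - 1, (Nat.succ_pred_eq_of_pos hN).symm⟩
  have hzero : (⟨0, hN⟩ : Fin (n+1)) = 0 := rfl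
  simp only [hzero]
  -- basic facts about ρ
  have hρint : Integrable ρ := by
    by_contra h
    rw [integral_undef h] at hρ1
    exact one_ne_zero hρ1.symm
  have hd1 : ∫⁻ w : ℝ × E2, ENNReal.ofReal (ρ w) = 1 := by
    rw [← ofReal_integral_eq_lintegral_ofReal hρint (ae_of_all _ hρ0), hρ1, ENNReal.ofReal_one]
  have hφzm : ∀ z, Measurable (fun w => φ z w) := fun z => hφm.comp measurable_prodMk_left
  have hφρint : ∀ z, Integrable (fun w => φ z w * ρ w) := fun z =>
    Integrable.mono' (hρint.const_mul lam) ((hφzm z).mul hρm).aestronglyMeasurable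
      (ae_of_all _ fun w => by
        rw [Real.norm_eq_abs, abs_mul, abs_of_nonneg (hρ0 w)]
        exact mul_le_mul_of_nonneg_right (hφb z w) (hρ0 w))
  -- numerics
  have hNa1 : (1:ℝ) ≤ ((n+1 : ℕ) : ℝ) := by exact_mod_cast hN
  have hNa0 : (0:ℝ) < ((n+1 : ℕ) : ℝ) := by linarith
  set a : ℝ := 2 / ((n+1 : ℕ) : ℝ) with ha
  have ha0 : 0 < a := by positivity
  set t : ℝ := Real.sqrt (2*a) with ht
  have ht2 : t^2 = 2*a := Real.sq_sqrt (by positivity)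
  -- Hoeffding bound for the one-particle mgf
  have hoeff : ∀ (z : ℝ × E2) (s : ℝ),
      (∫⁻ w : ℝ × E2, ENNReal.ofReal (ρ w) * ENNReal.ofReal (Real.exp (s * φ z w)))
        ≤ ENNReal.ofReal (Real.exp (s^2 * lam^2 / 2)) := by
    intro z s
    have hintl : Integrable (fun w => lam * ρ w) := hρint.const_mul lam
    have hint1 : Integrable (fun w => lam * ρ w - φ z w * ρ w) := hintl.sub (hφρint z)
    have hint2 : Integrable (fun w => lam * ρ w + φ z w * ρ w) := hintl.add (hφρint z)
    have hint1' : Integrable (fun w => (Real.exp (-(s*lam))/(2*lam)) * (lam * ρ w - φ z w * ρ w)) :=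
      hint1.const_mul _
    have hint2' : Integrable (fun w => (Real.exp (s*lam)/(2*lam)) * (lam * ρ w + φ z w * ρ w)) :=
      hint2.const_mul _
    have hint : Integrable (fun w => (Real.exp (-(s*lam))/(2*lam)) * (lam * ρ w - φ z w * ρ w)
        + (Real.exp (s*lam)/(2*lam)) * (lam * ρ w + φ z w * ρ w)) := hint1'.add hint2'
    have I1 : ∫ w : ℝ × E2, (lam * ρ w - φ z w * ρ w) = lam := by
      rw [integral_sub hintl (hφρint z), integral_const_mul _ _, hρ1, hφ0 z]
      ring
    have I2 : ∫ w : ℝ × E2, (lam * ρ w + φ z w * ρ w) = lam := by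
      rw [integral_add hintl (hφρint z), integral_const_mul _ _, hρ1, hφ0 z]
      ring
    have hf_eq : (fun w => ρ w * (((lam - φ z w)/(2*lam)) * Real.exp (-(s*lam))
          + ((lam + φ z w)/(2*lam)) * Real.exp (s*lam)))
        = fun w => (Real.exp (-(s*lam))/(2*lam)) * (lam * ρ w - φ z w * ρ w)
          + (Real.exp (s*lam)/(2*lam)) * (lam * ρ w + φ z w * ρ w) := by
      funext w
      field_simp
    calc ∫⁻ w : ℝ × E2, ENNReal.ofReal (ρ w) * ENNReal.ofReal (Real.exp (s * φ z w))
        = ∫⁻ w : ℝ × E2, ENNReal.ofReal (ρ w * Real.exp (s * φ z w)) := by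
          refine lintegral_congr fun w => ?_
          rw [← ENNReal.ofReal_mul (hρ0 w)]
      _ ≤ ∫⁻ w : ℝ × E2, ENNReal.ofReal (ρ w * (((lam - φ z w)/(2*lam)) * Real.exp (-(s*lam))
            + ((lam + φ z w)/(2*lam)) * Real.exp (s*lam))) :=
          lintegral_mono fun w => ENNReal.ofReal_le_ofReal
            (mul_le_mul_of_nonneg_left (exp_le_convex s hlam0 (hφb z w)) (hρ0 w))
      _ = ENNReal.ofReal (∫ w : ℝ × E2, ρ w * (((lam - φ z w)/(2*lam)) * Real.exp (-(s*lam))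
            + ((lam + φ z w)/(2*lam)) * Real.exp (s*lam))) := by
          rw [← ofReal_integral_eq_lintegral_ofReal]
          · rw [hf_eq]; exact hint
          · refine ae_of_all _ fun w => mul_nonneg (hρ0 w) (add_nonneg
              (mul_nonneg (div_nonneg (by linarith [le_of_abs_le (hφb z w)]) (by linarith))
                (Real.exp_nonneg _))
              (mul_nonneg (div_nonneg (by linarith [neg_le_of_abs_le (hφb z w)]) (by linarith))
                (Real.exp_nonneg _)))
      _ ≤ ENNReal.ofReal (Real.exp (s^2 * lam^2 / 2)) := by
          refine ENNReal.ofReal_le_ofReal ?_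
          rw [hf_eq, integral_add hint1' hint2', integral_const_mul _ _, integral_const_mul _ _,
            I1, I2]
          have hcosh := Real.cosh_le_exp_half_sq (s * lam)
          rw [Real.cosh_eq] at hcosh
          have harg : (s*lam)^2/2 = s^2 * lam^2/2 := by ring
          rw [harg] at hcosh
          have hlamne : lam ≠ 0 := hlam0.ne'
          calc Real.exp (-(s*lam))/(2*lam) * lam + Real.exp (s*lam)/(2*lam) * lam
              = (Real.exp (s*lam) + Real.exp (-(s*lam)))/2 := by field_simp; ring
            _ ≤ Real.exp (s^2 * lam^2/2) := hcosh
  -- measurability helpers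
  have hφ2m : ∀ (i j : Fin (n+1)), Measurable (fun Z : Fin (n+1) → ℝ × E2 => φ (Z i) (Z j)) := by
    intro i j
    have heq : (fun Z : Fin (n+1) → ℝ × E2 => φ (Z i) (Z j))
        = (fun p : (ℝ × E2) × (ℝ × E2) => φ p.1 p.2) ∘ (fun Z => (Z i, Z j)) := rfl
    rw [heq]
    exact hφm.comp ((measurable_pi_apply i).prodMk (measurable_pi_apply j))
  have hφpm : ∀ j : Fin n, Measurable (fun p : (ℝ × E2) × (Fin n → ℝ × E2) => φ p.1 (p.2 j)) := by
    intro j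
    have heq : (fun p : (ℝ × E2) × (Fin n → ℝ × E2) => φ p.1 (p.2 j))
        = (fun p : (ℝ × E2) × (ℝ × E2) => φ p.1 p.2) ∘ (fun p => (p.1, p.2 j)) := rfl
    rw [heq]
    exact hφm.comp (measurable_fst.prodMk ((measurable_pi_apply j).comp measurable_snd))
  have hTm : Measurable (fun Z : Fin (n+1) → ℝ × E2 => ∑ j : Fin n, φ (Z 0) (Z j.succ)) :=
    Finset.measurable_sum _ fun j _ => hφ2m 0 j.succ
  have hPm : Measurable (fun Z : Fin (n+1) → ℝ × E2 => ∏ i, ENNReal.ofReal (ρ (Z i))) :=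
    Finset.measurable_prod _ fun i _ => (hρm.comp (measurable_pi_apply i)).ennreal_ofReal
  have hGm : Measurable (fun Z : Fin (n+1) → ℝ × E2 => (∏ i, ρ (Z i)) *
      Real.exp ((1 / ((n+1:ℕ) : ℝ)) * ∑ j : Fin (n+1), ∑ k : Fin (n+1),
        φ (Z 0) (Z j) * φ (Z 0) (Z k))) := by
    refine (Finset.measurable_prod _ fun i _ => hρm.comp (measurable_pi_apply i)).mul ?_
    refine Measurable.exp (Measurable.const_mul ?_ _)
    refine Finset.measurable_sum _ fun j _ => Finset.measurable_sum _ fun k _ => ?_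
    exact (hφ2m 0 j).mul (hφ2m 0 k)
  have hG0 : ∀ Z : Fin (n+1) → ℝ × E2, 0 ≤ (∏ i, ρ (Z i)) *
      Real.exp ((1 / ((n+1:ℕ) : ℝ)) * ∑ j : Fin (n+1), ∑ k : Fin (n+1),
        φ (Z 0) (Z j) * φ (Z 0) (Z k)) :=
    fun Z => mul_nonneg (Finset.prod_nonneg fun i _ => hρ0 _) (Real.exp_nonneg _)
  rw [MeasureTheory.integral_eq_lintegral_of_nonneg_ae (ae_of_all _ hG0)
    hGm.aestronglyMeasurable]
  refine ENNReal.toReal_le_of_le_ofReal hC0 ?_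
  -- the key chain of estimates at the level of lower integrals
  calc ∫⁻ Z : Fin (n+1) → ℝ × E2, ENNReal.ofReal ((∏ i, ρ (Z i)) *
          Real.exp ((1 / ((n+1:ℕ) : ℝ)) * ∑ j : Fin (n+1), ∑ k : Fin (n+1),
            φ (Z 0) (Z j) * φ (Z 0) (Z k)))
      = ∫⁻ Z : Fin (n+1) → ℝ × E2, (∏ i, ENNReal.ofReal (ρ (Z i))) *
          ENNReal.ofReal (Real.exp ((1 / ((n+1:ℕ) : ℝ)) * ∑ j : Fin (n+1), ∑ k : Fin (n+1),
            φ (Z 0) (Z j) * φ (Z 0) (Z k))) := by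
        refine lintegral_congr fun Z => ?_
        rw [ENNReal.ofReal_mul (Finset.prod_nonneg fun i _ => hρ0 _),
          ENNReal.ofReal_prod_of_nonneg (fun i _ => hρ0 _)]
    _ ≤ ∫⁻ Z : Fin (n+1) → ℝ × E2, (∏ i, ENNReal.ofReal (ρ (Z i))) *
          (ENNReal.ofReal (Real.exp (2*lam^2)) *
            ENNReal.ofReal (Real.exp (a * (∑ j : Fin n, φ (Z 0) (Z j.succ))^2))) := by
        refine lintegral_mono fun Z => mul_le_mul_right ?_ _
        rw [← ENNReal.ofReal_mul (Real.exp_nonneg _), ← Real.exp_add]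
        refine ENNReal.ofReal_le_ofReal (Real.exp_le_exp.mpr ?_)
        have hSS : ∑ j : Fin (n+1), ∑ k : Fin (n+1), φ (Z 0) (Z j) * φ (Z 0) (Z k)
            = (∑ j : Fin (n+1), φ (Z 0) (Z j)) * (∑ k : Fin (n+1), φ (Z 0) (Z k)) :=
          (Fintype.sum_mul_sum _ _).symm
        have hsplit : ∑ j : Fin (n+1), φ (Z 0) (Z j)
            = φ (Z 0) (Z 0) + ∑ j : Fin n, φ (Z 0) (Z j.succ) := Fin.sum_univ_succ _
        rw [hSS, hsplit]
        have hc := abs_le.mp (hφb (Z 0) (Z 0))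
        have hu1 : 1/((n+1:ℕ):ℝ) ≤ 1 := by
          rw [div_le_one hNa0]; exact hNa1
        have hu0 : (0:ℝ) < 1/((n+1:ℕ):ℝ) := by positivity
        have ha' : a = 2 * (1/((n+1:ℕ):ℝ)) := by rw [ha]; ring
        rw [ha']
        set c := φ (Z 0) (Z 0)
        set T := ∑ j : Fin n, φ (Z 0) (Z j.succ)
        set u := 1/((n+1:ℕ):ℝ)
        nlinarith [mul_nonneg hu0.le (sq_nonneg (c - T)),
          mul_nonneg (by linarith : (0:ℝ) ≤ 1 - u) (sq_nonneg c), sq_nonneg c, sq_nonneg T,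
          mul_nonneg hu0.le (sq_nonneg T)]
    _ = ENNReal.ofReal (Real.exp (2*lam^2)) * ∫⁻ Z : Fin (n+1) → ℝ × E2,
          (∏ i, ENNReal.ofReal (ρ (Z i))) *
          ENNReal.ofReal (Real.exp (a * (∑ j : Fin n, φ (Z 0) (Z j.succ))^2)) := by
        rw [← lintegral_const_mul (ENNReal.ofReal (Real.exp (2*lam^2)))
          (f := fun Z : Fin (n+1) → ℝ × E2 => (∏ i, ENNReal.ofReal (ρ (Z i))) *
            ENNReal.ofReal (Real.exp (a * (∑ j : Fin n, φ (Z 0) (Z j.succ))^2)))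
          (hPm.mul (((hTm.pow_const 2).const_mul a).exp.ennreal_ofReal))]
        refine lintegral_congr fun Z => ?_
        ring
    _ ≤ ENNReal.ofReal (Real.exp (2*lam^2)) *
          ENNReal.ofReal ((Real.sqrt (2*π))⁻¹ * Real.sqrt (π / (1/2 - 2*lam^2))) := by
        refine mul_le_mul_right ?_ _
        -- Gaussian linearization + Tonelli + i.i.d. factorization + Hoeffding
        have hswapm : Measurable (fun p : (Fin (n+1) → ℝ × E2) × ℝ =>
            (∏ i, ENNReal.ofReal (ρ (p.1 i))) *
            ENNReal.ofReal (gpdf p.2 * Real.exp (t * p.2 *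
              ∑ j : Fin n, φ (p.1 0) (p.1 j.succ)))) := by
          refine (hPm.comp measurable_fst).mul (Measurable.ennreal_ofReal ?_)
          have hTfst : Measurable (fun p : (Fin (n+1) → ℝ × E2) × ℝ =>
              ∑ j : Fin n, φ (p.1 0) (p.1 j.succ)) := by
            have heq : (fun p : (Fin (n+1) → ℝ × E2) × ℝ => ∑ j : Fin n, φ (p.1 0) (p.1 j.succ))
                = (fun Z : Fin (n+1) → ℝ × E2 => ∑ j : Fin n, φ (Z 0) (Z j.succ)) ∘ Prod.fst := rfl
            rw [heq]
            exact hTm.comp measurable_fst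
          exact (measurable_gpdf.comp measurable_snd).mul
            (((measurable_const.mul measurable_snd).mul hTfst).exp)
        calc ∫⁻ Z : Fin (n+1) → ℝ × E2, (∏ i, ENNReal.ofReal (ρ (Z i))) *
                ENNReal.ofReal (Real.exp (a * (∑ j : Fin n, φ (Z 0) (Z j.succ))^2))
            = ∫⁻ Z : Fin (n+1) → ℝ × E2, ∫⁻ g : ℝ, (∏ i, ENNReal.ofReal (ρ (Z i))) *
                ENNReal.ofReal (gpdf g * Real.exp (t * g *
                  ∑ j : Fin n, φ (Z 0) (Z j.succ))) := by
              refine lintegral_congr fun Z => ?_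
              rw [lintegral_const_mul (∏ i, ENNReal.ofReal (ρ (Z i)))
                (f := fun g : ℝ => ENNReal.ofReal (gpdf g * Real.exp (t * g *
                  ∑ j : Fin n, φ (Z 0) (Z j.succ))))
                (Measurable.ennreal_ofReal (measurable_gpdf.mul
                  (((measurable_id.const_mul t).mul_const _).exp)))]
              congr 1
              have harg : a * (∑ j : Fin n, φ (Z 0) (Z j.succ))^2
                  = (t * ∑ j : Fin n, φ (Z 0) (Z j.succ))^2 / 2 := by
                rw [mul_pow, ht2]; ring
              rw [harg, ← lintegral_gpdf_exp_mul (t * ∑ j : Fin n, φ (Z 0) (Z j.succ))]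
              refine lintegral_congr fun g => ?_
              rw [show t * (∑ j : Fin n, φ (Z 0) (Z j.succ)) * g
                  = t * g * ∑ j : Fin n, φ (Z 0) (Z j.succ) from by ring]
          _ = ∫⁻ g : ℝ, ∫⁻ Z : Fin (n+1) → ℝ × E2, (∏ i, ENNReal.ofReal (ρ (Z i))) *
                ENNReal.ofReal (gpdf g * Real.exp (t * g *
                  ∑ j : Fin n, φ (Z 0) (Z j.succ))) :=
              lintegral_lintegral_swap hswapm.aemeasurable
          _ ≤ ∫⁻ g : ℝ, ENNReal.ofReal (gpdf g * Real.exp (2*lam^2 * g^2)) := by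
              refine lintegral_mono fun g => ?_
              have hzm : ∀ z : ℝ × E2, Measurable (fun w : ℝ × E2 =>
                  ENNReal.ofReal (ρ w) * ENNReal.ofReal (Real.exp (t * g * φ z w))) :=
                fun z => (hρm.ennreal_ofReal).mul
                  (((hφzm z).const_mul (t*g)).exp.ennreal_ofReal)
              have hFm : Measurable (fun p : (ℝ × E2) × (Fin n → ℝ × E2) =>
                  ENNReal.ofReal (ρ p.1) * ∏ j : Fin n, (ENNReal.ofReal (ρ (p.2 j)) *
                    ENNReal.ofReal (Real.exp (t * g * φ p.1 (p.2 j))))) := by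
                refine ((hρm.comp measurable_fst).ennreal_ofReal).mul
                  (Finset.measurable_prod _ fun j _ => Measurable.mul (f := fun p : (ℝ × E2) × (Fin n → ℝ × E2) => ENNReal.ofReal (ρ (p.2 j)))
                    (g := fun p : (ℝ × E2) × (Fin n → ℝ × E2) => ENNReal.ofReal (Real.exp (t * g * φ p.1 (p.2 j)))) ?_ ?_)
                · exact (hρm.comp ((measurable_pi_apply j).comp measurable_snd)).ennreal_ofReal
                · exact (((hφpm j).const_mul (t*g)).exp).ennreal_ofReal
              calc ∫⁻ Z : Fin (n+1) → ℝ × E2, (∏ i, ENNReal.ofReal (ρ (Z i))) *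
                      ENNReal.ofReal (gpdf g * Real.exp (t * g *
                        ∑ j : Fin n, φ (Z 0) (Z j.succ)))
                  = ∫⁻ Z : Fin (n+1) → ℝ × E2, ENNReal.ofReal (gpdf g) *
                      (ENNReal.ofReal (ρ (Z 0)) * ∏ j : Fin n, (ENNReal.ofReal (ρ (Z j.succ)) *
                        ENNReal.ofReal (Real.exp (t * g * φ (Z 0) (Z j.succ))))) := by
                    refine lintegral_congr fun Z => ?_
                    rw [ENNReal.ofReal_mul (gpdf_nonneg g),
                      show t * g * (∑ j : Fin n, φ (Z 0) (Z j.succ))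
                        = ∑ j : Fin n, (t * g) * φ (Z 0) (Z j.succ) from Finset.mul_sum _ _ _,
                      Real.exp_sum,
                      ENNReal.ofReal_prod_of_nonneg (fun j _ => Real.exp_nonneg _),
                      Fin.prod_univ_succ (fun i => ENNReal.ofReal (ρ (Z i))),
                      Finset.prod_mul_distrib]
                    ring
                  _ = ENNReal.ofReal (gpdf g) * ∫⁻ Z : Fin (n+1) → ℝ × E2,
                      (ENNReal.ofReal (ρ (Z 0)) * ∏ j : Fin n, (ENNReal.ofReal (ρ (Z j.succ)) *
                        ENNReal.ofReal (Real.exp (t * g * φ (Z 0) (Z j.succ))))) := by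
                    rw [lintegral_const_mul (ENNReal.ofReal (gpdf g))
                      (f := fun Z : Fin (n+1) → ℝ × E2 => ENNReal.ofReal (ρ (Z 0)) *
                        ∏ j : Fin n, (ENNReal.ofReal (ρ (Z j.succ)) *
                          ENNReal.ofReal (Real.exp (t * g * φ (Z 0) (Z j.succ)))))
                      (Measurable.mul ((hρm.comp (measurable_pi_apply 0)).ennreal_ofReal)
                        (Finset.measurable_prod _ fun j _ => Measurable.mul
                          ((hρm.comp (measurable_pi_apply j.succ)).ennreal_ofReal)
                          (((hφ2m 0 j.succ).const_mul (t*g)).exp.ennreal_ofReal)))]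
                  _ = ENNReal.ofReal (gpdf g) * ∫⁻ z : ℝ × E2, ∫⁻ W : Fin n → ℝ × E2,
                      (ENNReal.ofReal (ρ z) * ∏ j : Fin n, (ENNReal.ofReal (ρ (W j)) *
                        ENNReal.ofReal (Real.exp (t * g * φ z (W j))))) := by
                    congr 1
                    exact split_first n (fun z W => ENNReal.ofReal (ρ z) *
                      ∏ j : Fin n, (ENNReal.ofReal (ρ (W j)) *
                        ENNReal.ofReal (Real.exp (t * g * φ z (W j))))) hFm
                  _ = ENNReal.ofReal (gpdf g) * ∫⁻ z : ℝ × E2, ENNReal.ofReal (ρ z) *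
                      ((∫⁻ w : ℝ × E2, ENNReal.ofReal (ρ w) *
                        ENNReal.ofReal (Real.exp (t * g * φ z w)))^n) := by
                    congr 1
                    refine lintegral_congr fun z => ?_
                    rw [lintegral_const_mul (ENNReal.ofReal (ρ z))
                      (f := fun W : Fin n → ℝ × E2 => ∏ j : Fin n, (ENNReal.ofReal (ρ (W j)) *
                        ENNReal.ofReal (Real.exp (t * g * φ z (W j)))))
                      (Finset.measurable_prod _ fun j _ =>
                        Measurable.mul ((hρm.comp (measurable_pi_apply j)).ennreal_ofReal)
                          ((((hφzm z).comp (measurable_pi_apply j)).const_mul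
                            (t*g)).exp.ennreal_ofReal))]
                    congr 1
                    exact prod_pow n (fun w => ENNReal.ofReal (ρ w) *
                      ENNReal.ofReal (Real.exp (t * g * φ z w))) (hzm z)
                  _ ≤ ENNReal.ofReal (gpdf g) * ∫⁻ z : ℝ × E2, ENNReal.ofReal (ρ z) *
                      ENNReal.ofReal (Real.exp (2*lam^2 * g^2)) := by
                    refine mul_le_mul_right (lintegral_mono fun z => mul_le_mul_right ?_ _) _
                    calc (∫⁻ w : ℝ × E2, ENNReal.ofReal (ρ w) *
                            ENNReal.ofReal (Real.exp (t * g * φ z w)))^n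
                        ≤ (ENNReal.ofReal (Real.exp ((t*g)^2 * lam^2 / 2)))^n :=
                          pow_le_pow_left₀ zero_le (hoeff z (t*g)) n
                      _ = ENNReal.ofReal (Real.exp ((n:ℝ) * ((t*g)^2 * lam^2 / 2))) := by
                          rw [Real.exp_nat_mul, ENNReal.ofReal_pow (Real.exp_nonneg _)]
                      _ ≤ ENNReal.ofReal (Real.exp (2*lam^2 * g^2)) := by
                          refine ENNReal.ofReal_le_ofReal (Real.exp_le_exp.mpr ?_)
                          have hna : (n:ℝ) * a ≤ 2 := by
                            have h1 : (n:ℝ) ≤ ((n+1:ℕ):ℝ) := by push_cast; linarith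
                            have h2 : (n:ℝ)/((n+1:ℕ):ℝ) ≤ 1 := by
                              rw [div_le_one hNa0]; exact h1
                            calc (n:ℝ) * a = 2 * ((n:ℝ)/((n+1:ℕ):ℝ)) := by rw [ha]; ring
                              _ ≤ 2 * 1 := by linarith
                              _ = 2 := by ring
                          have hexpand : (n:ℝ) * ((t*g)^2 * lam^2 / 2)
                              = ((n:ℝ) * a) * (lam^2 * g^2) := by
                            rw [mul_pow, ht2]; ring
                          rw [hexpand]
                          nlinarith [mul_le_mul_of_nonneg_right hna
                            (mul_nonneg (sq_nonneg lam) (sq_nonneg g))]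
                  _ = ENNReal.ofReal (gpdf g * Real.exp (2*lam^2 * g^2)) := by
                    rw [lintegral_mul_const _ hρm.ennreal_ofReal, hd1, one_mul,
                      ← ENNReal.ofReal_mul (gpdf_nonneg g)]
          _ = ENNReal.ofReal ((Real.sqrt (2*π))⁻¹ * Real.sqrt (π / (1/2 - 2*lam^2))) :=
              lintegral_gpdf_exp_sq hb
    _ = ENNReal.ofReal (Real.exp (2*lam^2) *
          ((Real.sqrt (2*π))⁻¹ * Real.sqrt (π / (1/2 - 2*lam^2)))) := by
        rw [ENNReal.ofReal_mul (Real.exp_nonneg _)]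

end
end

section
/- Closed-form evaluation of the iterated integrals: Let f : [0,∞) → ℝ_{≥0} be continuous and set φ(t) = ∫_0^t f(s) ds. For integers 1 ≤ k ≤ l define B_k^l and A_k^l on [0,∞) by the recursions B_k^k(t) = e^{−kφ(t)}; B_k^l(t) = k ∫_0^t e^{−k(φ(t)−φ(s))} f(s) B_{k+1}^l(s) ds for k < l; A_k^k(t) = 1 − e^{−kφ(t)}; and A_k^l(t) = A_k^{l−1}(t) − B_k^l(t) for k < l. Then for all 1 ≤ k ≤ l and t ≥ 0: B_k^l(t) = C(l−1, k−1) · (1 − e^{−φ(t)})^{l−k} · e^{−kφ(t)}, and A_k^l(t) = ( l! / ((l−k)!(k−1)!) ) ∫_{e^{−φ(t)}}^{1} z^{k−1} (1−z)^{l−k} dz; in particular A_k^l(t) = P(Y > e^{−φ(t)}) where Y has the Beta(k, l−k+1) distribution. -/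
open MeasureTheory Real Set

noncomputable section

/-- **Closed-form evaluation of the iterated integrals** (Lemma 2.12).
With `φ(t) = ∫₀ᵗ f`, the coefficients `B_k^l` and `A_k^l` defined by the recursions
`B_k^k(t) = e^{−kφ(t)}`,
`B_k^l(t) = k ∫₀ᵗ e^{−k(φ(t)−φ(s))} f(s) B_{k+1}^l(s) ds` for `k < l`,
`A_k^k(t) = 1 − e^{−kφ(t)}`, `A_k^l(t) = A_k^{l−1}(t) − B_k^l(t)` for `k < l`,
are given by
`B_k^l(t) = C(l−1,k−1) (1−e^{−φ(t)})^{l−k} e^{−kφ(t)}` and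
`A_k^l(t) = (l!/((l−k)!(k−1)!)) ∫_{e^{−φ(t)}}^1 z^{k−1}(1−z)^{l−k} dz`;
the latter is exactly the tail probability `P(Y > e^{−φ(t)})` of the
`Beta(k, l−k+1)` distribution. -/
theorem iterated_integrals_closed_form
    (f : ℝ → ℝ) (hf : Continuous f) (hf0 : ∀ t, 0 ≤ f t)
    (φ : ℝ → ℝ) (hφ : ∀ t, φ t = ∫ s in (0 : ℝ)..t, f s)
    (B A : ℕ → ℕ → ℝ → ℝ)
    (hBdiag : ∀ k, 1 ≤ k → ∀ t, B k k t = Real.exp (-(k : ℝ) * φ t))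
    (hBrec : ∀ k l, 1 ≤ k → k < l → ∀ t,
      B k l t = (k : ℝ) * ∫ s in (0 : ℝ)..t,
        Real.exp (-(k : ℝ) * (φ t - φ s)) * f s * B (k + 1) l s)
    (hAdiag : ∀ k, 1 ≤ k → ∀ t, A k k t = 1 - Real.exp (-(k : ℝ) * φ t))
    (hArec : ∀ k l, 1 ≤ k → k < l → ∀ t, A k l t = A k (l - 1) t - B k l t) :
    ∀ k l, 1 ≤ k → k ≤ l → ∀ t, 0 ≤ t →
      B k l t = (Nat.choose (l - 1) (k - 1) : ℝ)
          * (1 - Real.exp (-φ t)) ^ (l - k) * Real.exp (-(k : ℝ) * φ t)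
      ∧ A k l t = ((Nat.factorial l : ℝ)
            / ((Nat.factorial (l - k) : ℝ) * (Nat.factorial (k - 1) : ℝ)))
          * ∫ z in Real.exp (-φ t)..(1 : ℝ), z ^ (k - 1) * (1 - z) ^ (l - k) := by
  have hφ0 : φ 0 = 0 := by rw [hφ]; simp
  have hφfun : φ = fun u => ∫ s in (0 : ℝ)..u, f s := funext hφ
  have hφd : ∀ t, HasDerivAt φ (f t) t := by
    intro t
    rw [hφfun]
    exact (hf.integral_hasStrictDerivAt 0 t).hasDerivAt
  have hφc : Continuous φ := continuous_iff_continuousAt.2 fun t => (hφd t).continuousAt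
  have hexp : ∀ (c : ℕ) (x : ℝ), Real.exp (-(c : ℝ) * x) = Real.exp (-x) ^ c := by
    intro c x
    rw [show -(c : ℝ) * x = (c : ℝ) * (-x) by ring, Real.exp_nat_mul]
  -- closed form for B
  have hB : ∀ n k, 1 ≤ k → ∀ t, B k (k + n) t
      = ((k + n - 1).choose (k - 1) : ℝ) * (1 - Real.exp (-φ t)) ^ n
        * Real.exp (-φ t) ^ k := by
    intro n
    induction n with
    | zero =>
      intro k hk t
      rw [add_zero, hBdiag k hk t, hexp]
      simp
    | succ n ih =>
      intro k hk t
      rw [hBrec k (k + (n + 1)) hk (by omega) t]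
      have hin : ∀ s : ℝ, Real.exp (-(k : ℝ) * (φ t - φ s)) * f s * B (k + 1) (k + (n + 1)) s
          = (Real.exp (-φ t) ^ k * ((k + n).choose k : ℝ) / ((n : ℝ) + 1)) *
            (((n : ℝ) + 1) * (1 - Real.exp (-φ s)) ^ n * (Real.exp (-φ s) * f s)) := by
        intro s
        have hb := ih (k + 1) (by omega) s
        rw [show k + 1 + n = k + (n + 1) by omega] at hb
        rw [show k + (n + 1) - 1 = k + n by omega, show k + 1 - 1 = k by omega] at hb
        rw [hb]
        have e1 : Real.exp (-(k : ℝ) * (φ t - φ s)) * Real.exp (-φ s) ^ k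
            = Real.exp (-φ t) ^ k := by
          rw [← Real.exp_nat_mul, ← Real.exp_nat_mul, ← Real.exp_add]
          congr 1; ring
        have hn1 : ((n : ℝ) + 1) ≠ 0 := by positivity
        calc Real.exp (-(k : ℝ) * (φ t - φ s)) * f s *
              (((k + n).choose k : ℝ) * (1 - Real.exp (-φ s)) ^ n * Real.exp (-φ s) ^ (k + 1))
            = (Real.exp (-(k : ℝ) * (φ t - φ s)) * Real.exp (-φ s) ^ k) *
              (f s * ((k + n).choose k : ℝ) * (1 - Real.exp (-φ s)) ^ n * Real.exp (-φ s)) := by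
              rw [pow_succ]; ring
          _ = Real.exp (-φ t) ^ k *
              (f s * ((k + n).choose k : ℝ) * (1 - Real.exp (-φ s)) ^ n * Real.exp (-φ s)) := by
              rw [e1]
          _ = (Real.exp (-φ t) ^ k * ((k + n).choose k : ℝ) / ((n : ℝ) + 1)) *
              (((n : ℝ) + 1) * (1 - Real.exp (-φ s)) ^ n * (Real.exp (-φ s) * f s)) := by
              field_simp
      simp only [hin]
      rw [intervalIntegral.integral_const_mul]
      have hder : ∀ s ∈ uIcc (0 : ℝ) t,
          HasDerivAt (fun u => (1 - Real.exp (-φ u)) ^ (n + 1))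
            (((n : ℝ) + 1) * (1 - Real.exp (-φ s)) ^ n * (Real.exp (-φ s) * f s)) s := by
        intro s _
        have h1 : HasDerivAt (fun u => 1 - Real.exp (-φ u)) (Real.exp (-φ s) * f s) s := by
          have := (((hφd s).neg).exp).const_sub 1
          refine this.congr_deriv ?_
          simp only [Pi.neg_apply]
          ring
        have h2 := h1.pow (n + 1)
        refine h2.congr_deriv ?_
        push_cast
        ring
      have hint : IntervalIntegrable
          (fun s => ((n : ℝ) + 1) * (1 - Real.exp (-φ s)) ^ n * (Real.exp (-φ s) * f s))
          volume 0 t := by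
        apply Continuous.intervalIntegrable
        fun_prop
      rw [intervalIntegral.integral_eq_sub_of_hasDerivAt hder hint, hφ0]
      have hch : (k + n).choose k * k = (k + n).choose (k - 1) * (n + 1) := by
        have h := Nat.choose_succ_right_eq (k + n) (k - 1)
        rw [show k - 1 + 1 = k by omega, show k + n - (k - 1) = n + 1 by omega] at h
        exact h
      have hchR : ((k + n).choose k : ℝ) * k = ((k + n).choose (k - 1) : ℝ) * ((n : ℝ) + 1) := by
        exact_mod_cast congrArg (Nat.cast : ℕ → ℝ) hch
      rw [show k + (n + 1) - 1 = k + n by omega]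
      have hn1 : ((n : ℝ) + 1) ≠ 0 := by positivity
      simp only [neg_zero, Real.exp_zero, sub_self]
      rw [zero_pow (Nat.succ_ne_zero n), sub_zero]
      field_simp
      linear_combination ((1 - Real.exp (-φ t)) ^ (n + 1)) * hchR
  -- closed form for A
  have hA : ∀ m j (t : ℝ), A (j + 1) (j + 1 + m) t
      = (((j + 1 + m).factorial : ℝ) / ((m.factorial : ℝ) * (j.factorial : ℝ)))
        * ∫ z in Real.exp (-φ t)..(1 : ℝ), z ^ j * (1 - z) ^ m := by
    intro m
    induction m with
    | zero =>
      intro j t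
      rw [add_zero, hAdiag (j + 1) (by omega) t, hexp]
      have hi : (∫ z in Real.exp (-φ t)..(1 : ℝ), z ^ j * (1 - z) ^ (0 : ℕ))
          = (1 - Real.exp (-φ t) ^ (j + 1)) / ((j : ℝ) + 1) := by
        simp only [pow_zero, mul_one]
        rw [integral_pow]
        push_cast
        ring
      rw [hi, Nat.factorial_succ]
      have hj1 : ((j : ℝ) + 1) ≠ 0 := by positivity
      have hjf : (j.factorial : ℝ) ≠ 0 := Nat.cast_ne_zero.2 j.factorial_ne_zero
      push_cast
      field_simp
      simp
    | succ m ih =>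
      intro j t
      have hrec := hArec (j + 1) (j + 1 + (m + 1)) (by omega) (by omega) t
      rw [show j + 1 + (m + 1) - 1 = j + 1 + m by omega] at hrec
      rw [hrec, ih j t]
      have hb := hB (m + 1) (j + 1) (by omega) t
      rw [show j + 1 + (m + 1) - 1 = j + 1 + m by omega, show j + 1 - 1 = j by omega] at hb
      rw [hb]
      set x := Real.exp (-φ t) with hxdef
      set c1 : ℝ := ((j + 1 + m).factorial : ℝ) / ((m.factorial : ℝ) * (j.factorial : ℝ)) with hc1
      set c2 : ℝ := ((j + 1 + (m + 1)).factorial : ℝ)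
        / (((m + 1).factorial : ℝ) * (j.factorial : ℝ)) with hc2
      set C : ℝ := ((j + 1 + m).choose j : ℝ) with hC
      have hjf : (j.factorial : ℝ) ≠ 0 := Nat.cast_ne_zero.2 j.factorial_ne_zero
      have hmf : (m.factorial : ℝ) ≠ 0 := Nat.cast_ne_zero.2 m.factorial_ne_zero
      have hCval : C = ((j + 1 + m).factorial : ℝ)
          / ((j.factorial : ℝ) * (((m + 1).factorial : ℝ))) := by
        rw [hC, Nat.cast_choose ℝ (by omega : j ≤ j + 1 + m),
          show j + 1 + m - j = m + 1 by omega]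
      have hfs1 : ((j + 1 + (m + 1)).factorial : ℝ)
          = ((j + 1 + m : ℕ) + 1 : ℝ) * ((j + 1 + m).factorial : ℝ) := by
        rw [show j + 1 + (m + 1) = (j + 1 + m) + 1 by omega, Nat.factorial_succ]
        push_cast; ring
      have hfs2 : (((m + 1).factorial : ℝ)) = ((m : ℝ) + 1) * (m.factorial : ℝ) := by
        rw [Nat.factorial_succ]; push_cast; ring
      -- FTC identity
      have hH : ∀ z ∈ uIcc x (1 : ℝ),
          HasDerivAt (fun z : ℝ => -C * (z ^ (j + 1) * (1 - z) ^ (m + 1)))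
            (c1 * (z ^ j * (1 - z) ^ m) - c2 * (z ^ j * (1 - z) ^ (m + 1))) z := by
        intro z _
        have hz1 : HasDerivAt (fun z : ℝ => (1 - z) ^ (m + 1))
            ((((m : ℝ) + 1) * (1 - z) ^ m) * (-1)) z := by
          have := ((hasDerivAt_id z).const_sub 1).pow (m + 1)
          refine this.congr_deriv ?_
          simp only [id_eq]
          push_cast; ring
        have hz2 : HasDerivAt (fun z : ℝ => z ^ (j + 1) * (1 - z) ^ (m + 1))
            (((j : ℝ) + 1) * z ^ j * (1 - z) ^ (m + 1)
              + z ^ (j + 1) * ((((m : ℝ) + 1) * (1 - z) ^ m) * (-1))) z := by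
          have hp : HasDerivAt (fun z : ℝ => z ^ (j + 1)) (((j : ℝ) + 1) * z ^ j) z := by
            have := hasDerivAt_pow (j + 1) z
            refine this.congr_deriv ?_
            push_cast; ring
          exact hp.mul hz1
        have h2 := hz2.const_mul (-C)
        refine h2.congr_deriv ?_
        rw [hc1, hc2, hCval, hfs1, hfs2, pow_succ z j, pow_succ (1 - z) m]
        field_simp
        push_cast
        ring
      have hint1 : IntervalIntegrable (fun z : ℝ => z ^ j * (1 - z) ^ m) volume x 1 := by
        apply Continuous.intervalIntegrable; fun_prop
      have hint2 : IntervalIntegrable (fun z : ℝ => z ^ j * (1 - z) ^ (m + 1)) volume x 1 := by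
        apply Continuous.intervalIntegrable; fun_prop
      have hintS : IntervalIntegrable
          (fun z : ℝ => c1 * (z ^ j * (1 - z) ^ m) - c2 * (z ^ j * (1 - z) ^ (m + 1)))
          volume x 1 := by
        apply Continuous.intervalIntegrable; fun_prop
      have hFTC := intervalIntegral.integral_eq_sub_of_hasDerivAt hH hintS
      rw [intervalIntegral.integral_sub ((hint1.const_mul c1)) ((hint2.const_mul c2)),
        intervalIntegral.integral_const_mul, intervalIntegral.integral_const_mul] at hFTC
      simp only [one_pow, sub_self, zero_pow (Nat.succ_ne_zero m), mul_zero, mul_one,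
        neg_zero, zero_sub, neg_neg, mul_neg, neg_mul] at hFTC
      linarith [hFTC]
  -- assemble
  intro k l hk hkl t ht
  obtain ⟨j, rfl⟩ : ∃ j, k = j + 1 := ⟨k - 1, by omega⟩
  obtain ⟨m, rfl⟩ : ∃ m, l = j + 1 + m := ⟨l - (j + 1), by omega⟩
  constructor
  · have := hB m (j + 1) (by omega) t
    rw [show j + 1 + m - 1 = j + m by omega, show j + 1 - 1 = j by omega] at this
    rw [this, hexp, show j + 1 + m - 1 = j + m by omega, show j + 1 - 1 = j by omega,
      show j + 1 + m - (j + 1) = m by omega]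
  · have := hA m j t
    rw [this, show j + 1 + m - (j + 1) = m by omega, show j + 1 - 1 = j by omega]
end
end
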